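/- Let S be a monoid, let r_h be a Hoehnke radical of S-acts, and let r_k be a Kurosh-Amitsur radical with R_{r_k} = R_{r_h}. Then r_k ≤ r_h, and every Kurosh-Amitsur radical r with r ≤ r_h satisfies r ≤ r_k; hence r_k is the largest Kurosh-Amitsur radical below r_h, i.e., r_k = ⋁{r : r a Kurosh-Amitsur radical with r ≤ r_h}. -/

import Mathlib

universe u

/-- A (left) `S`-act: a type equipped with a monoid action of `S`. -/
structure SAct (S : Type u) [Monoid S] where
  carrier : Type u
  [mulAction : MulAction S carrier]

attribute [instance] SAct.mulAction

namespace SAct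

variable {S : Type u} [Monoid S]

/-- A homomorphism of `S`-acts. -/
def IsHom (A B : SAct S) (f : A.carrier → B.carrier) : Prop :=
  ∀ (s : S) (a : A.carrier), f (s • a) = s • f a

/-- A homomorphism is trivial if its image has at most one element. -/
def IsTrivialHom {A B : SAct S} (f : A.carrier → B.carrier) : Prop :=
  (Set.range f).Subsingleton

/-- Two `S`-acts are isomorphic if there is a bijective homomorphism between them. -/
def AreIso (A B : SAct S) : Prop :=
  ∃ f : A.carrier → B.carrier, IsHom A B f ∧ Function.Bijective f

/-- A subset of an `S`-act is a subact if it is closed under the action. -/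
def IsSubact (A : SAct S) (B : Set A.carrier) : Prop :=
  ∀ (s : S), ∀ a ∈ B, s • a ∈ B

/-- The `S`-act induced on a subact. -/
def sub (A : SAct S) (B : Set A.carrier) (h : IsSubact A B) : SAct S where
  carrier := ↥B
  mulAction :=
    { smul := fun s b => ⟨s • (b : A.carrier), h s b b.2⟩
      one_smul := fun b => Subtype.ext (one_smul S (b : A.carrier))
      mul_smul := fun s t b => Subtype.ext (mul_smul s t (b : A.carrier)) }

/-- A congruence on an `S`-act: an equivalence relation compatible with the action. -/
def IsActCon (A : SAct S) (ρ : Setoid A.carrier) : Prop :=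
  ∀ (s : S) (a a' : A.carrier), ρ a a' → ρ (s • a) (s • a')

/-- The quotient `S`-act of an `S`-act by a congruence. -/
def quot (A : SAct S) (ρ : Setoid A.carrier) (h : IsActCon A ρ) : SAct S where
  carrier := Quotient ρ
  mulAction :=
    { smul := fun s => Quotient.map (fun a => s • a) (fun a b hab => h s a b hab)
      one_smul := fun q => Quotient.inductionOn q (fun a => by
        show Quotient.map (fun a => (1 : S) • a) _ (Quotient.mk ρ a) = Quotient.mk ρ a
        rw [Quotient.map_mk, one_smul])
      mul_smul := fun s t q => Quotient.inductionOn q (fun a => by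
        show Quotient.map (fun a => (s * t) • a) _ (Quotient.mk ρ a)
            = Quotient.map (fun a => s • a) _ (Quotient.map (fun a => t • a) _ (Quotient.mk ρ a))
        rw [Quotient.map_mk, Quotient.map_mk, Quotient.map_mk, mul_smul]) }

/-- A system of pairwise disjoint non-trivial subacts of an `S`-act. -/
def IsSystem (A : SAct S) (Sys : Set (Set A.carrier)) : Prop :=
  (∀ B ∈ Sys, IsSubact A B ∧ ¬ B.Subsingleton) ∧
    (∀ B ∈ Sys, ∀ C ∈ Sys, B ≠ C → ∀ a ∈ B, a ∉ C)

/-- The Rees congruence determined by a system of pairwise disjoint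
non-trivial subacts: `a` and `b` are related iff `a = b` or `a` and `b`
lie in a common member of the system. -/
def reesSetoid (A : SAct S) (Sys : Set (Set A.carrier)) (hSys : IsSystem A Sys) :
    Setoid A.carrier where
  r a b := a = b ∨ ∃ B ∈ Sys, a ∈ B ∧ b ∈ B
  iseqv :=
    { refl := fun _ => Or.inl rfl
      symm := by
        rintro a b (rfl | ⟨B, hB, ha, hb⟩)
        · exact Or.inl rfl
        · exact Or.inr ⟨B, hB, hb, ha⟩
      trans := by
        rintro a b c (rfl | ⟨B, hB, ha, hb⟩) h2
        · exact h2
        · rcases h2 with rfl | ⟨C, hC, hb', hc⟩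
          · exact Or.inr ⟨B, hB, ha, hb⟩
          · by_cases hBC : B = C
            · exact Or.inr ⟨B, hB, ha, hBC ▸ hc⟩
            · exact absurd hb' (hSys.2 B hB C hC hBC b hb) }

/-- A Rees congruence is a congruence. -/
theorem reesSetoid_isActCon (A : SAct S) (Sys : Set (Set A.carrier)) (hSys : IsSystem A Sys) :
    IsActCon A (reesSetoid A Sys hSys) := by
  rintro s a a' (rfl | ⟨B, hB, ha, ha'⟩)
  · exact Or.inl rfl
  · exact Or.inr ⟨B, hB, (hSys.1 B hB).1 s a ha, (hSys.1 B hB).1 s a' ha'⟩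

/-- The system of non-singleton classes of a congruence (for a Rees congruence,
this is its system `Σ_ρ` of non-trivial subacts). -/
def nsClasses (A : SAct S) (ρ : Setoid A.carrier) : Set (Set A.carrier) :=
  {C | (∃ a, C = {x | ρ x a}) ∧ ¬ C.Subsingleton}

/-- A congruence is a Rees congruence if it arises from a system of pairwise
disjoint non-trivial subacts. -/
def IsRees (A : SAct S) (ρ : Setoid A.carrier) : Prop :=
  ∃ (Sys : Set (Set A.carrier)) (hSys : IsSystem A Sys), ρ = reesSetoid A Sys hSys

end SAct

open SAct

/-- A (normal) Hoehnke radical: an assignment of a congruence `rad A` to every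
`S`-act `A`, functorial with respect to homomorphisms, and with
`rad (A / rad A) = Δ`. -/
structure HoehnkeRadical (S : Type u) [Monoid S] where
  rad : (A : SAct S) → Setoid A.carrier
  isCon : ∀ A : SAct S, IsActCon A (rad A)
  functorial : ∀ {A B : SAct S} (f : A.carrier → B.carrier), IsHom A B f →
    ∀ a a' : A.carrier, rad A a a' → rad B (f a) (f a')
  rad_quot : ∀ A : SAct S, rad (A.quot (rad A) (isCon A)) = ⊥

namespace HoehnkeRadical

variable {S : Type u} [Monoid S]

/-- The radical class `R_r = {A : r(A) = ∇_A}` of a Hoehnke radical. -/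
def radClass (r : HoehnkeRadical S) : Set (SAct S) := {A | r.rad A = ⊤}

/-- The semisimple class `S_r = {A : r(A) = Δ_A}` of a Hoehnke radical. -/
def ssClass (r : HoehnkeRadical S) : Set (SAct S) := {A | r.rad A = ⊥}

/-- The pointwise order on Hoehnke radicals. -/
def le (r r' : HoehnkeRadical S) : Prop := ∀ A : SAct S, r.rad A ≤ r'.rad A

end HoehnkeRadical

/-- A Kurosh-Amitsur radical: a Hoehnke radical such that (i) every `rad A` is a
Rees congruence, (ii) every member of `Σ_{rad A}` is in the radical class, and
(iii) every system of pairwise disjoint non-trivial subacts belonging to the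
radical class is below `Σ_{rad A}`. -/
structure KARadical (S : Type u) [Monoid S] extends HoehnkeRadical S where
  rees : ∀ A : SAct S, IsRees A (rad A)
  cls_rad : ∀ A : SAct S, ∀ B ∈ nsClasses A (rad A), ∀ h : IsSubact A B,
    A.sub B h ∈ toHoehnkeRadical.radClass
  maximal : ∀ (A : SAct S) (Sys : Set (Set A.carrier)), IsSystem A Sys →
    (∀ B ∈ Sys, ∀ h : IsSubact A B, A.sub B h ∈ toHoehnkeRadical.radClass) →
    ∀ B ∈ Sys, ∃ C ∈ nsClasses A (rad A), B ⊆ C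

/-- A torsion theory: a pair `(T, F)` of classes of `S`-acts, each closed under
isomorphism and containing all trivial acts, such that (1) every homomorphism
from a member of `T` to a member of `F` is trivial, (2) `T` contains every act
all of whose homomorphisms into members of `F` are trivial, and (3) `F`
contains every act all of whose homomorphisms from members of `T` are trivial. -/
structure IsTorsionTheory {S : Type u} [Monoid S] (T F : Set (SAct S)) : Prop where
  iso_T : ∀ A B : SAct S, AreIso A B → A ∈ T → B ∈ T
  iso_F : ∀ A B : SAct S, AreIso A B → A ∈ F → B ∈ F
  trivial_T : ∀ A : SAct S, Subsingleton A.carrier → A ∈ T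
  trivial_F : ∀ A : SAct S, Subsingleton A.carrier → A ∈ F
  hom_trivial : ∀ A ∈ T, ∀ B ∈ F, ∀ f : A.carrier → B.carrier,
    IsHom A B f → IsTrivialHom (A := A) (B := B) f
  mem_T : ∀ A : SAct S,
    (∀ B ∈ F, ∀ f : A.carrier → B.carrier, IsHom A B f → IsTrivialHom (A := A) (B := B) f) →
    A ∈ T
  mem_F : ∀ B : SAct S,
    (∀ A ∈ T, ∀ f : A.carrier → B.carrier, IsHom A B f → IsTrivialHom (A := A) (B := B) f) →
    B ∈ F

/-- The product of a family of `S`-acts. -/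
def prodAct {S : Type u} [Monoid S] (ι : Type u) (f : ι → SAct S) : SAct S where
  carrier := ∀ i, (f i).carrier
  mulAction := inferInstance

/-- The Hoehnke radical `r_C` determined by a class `C` closed under subacts and
products: the meet of all congruences whose quotient lies in `C`. -/
def radC {S : Type u} [Monoid S] (C : Set (SAct S)) (A : SAct S) : Setoid A.carrier :=
  sInf {χ : Setoid A.carrier | ∃ h : IsActCon A χ, A.quot χ h ∈ C}

/-- The radical class `R_{r_C}` of the Hoehnke radical `r_C`. -/
def RradC {S : Type u} [Monoid S] (C : Set (SAct S)) : Set (SAct S) :=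
  {A | radC C A = ⊤}

/-- Every member of a system generating a Rees congruence is a non-singleton class. -/
lemma mem_nsClasses_of_system {S : Type u} [Monoid S] (A : SAct S)
    (Sys : Set (Set A.carrier)) (hSys : IsSystem A Sys)
    (ρ : Setoid A.carrier) (hEq : ρ = reesSetoid A Sys hSys)
    {B : Set A.carrier} (hB : B ∈ Sys) {a : A.carrier} (ha : a ∈ B) :
    B ∈ nsClasses A ρ := by
  refine ⟨⟨a, ?_⟩, (hSys.1 B hB).2⟩
  ext x
  subst hEq
  simp only [Set.mem_setOf_eq]
  constructor
  · intro hx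
    exact Or.inr ⟨B, hB, hx, ha⟩
  · intro hx
    rcases (hx : x = a ∨ ∃ C ∈ Sys, x ∈ C ∧ a ∈ C) with rfl | ⟨C, hC, hxC, haC⟩
    · exact ha
    · by_cases hCB : C = B
      · exact hCB ▸ hxC
      · exact absurd haC (hSys.2 B hB C hC (fun h => hCB h.symm) a ha)

theorem KA_radical_is_largest_below_hoehnke (S : Type u) [Monoid S]
    (rh : HoehnkeRadical S) (rk : KARadical S)
    (hR : rk.toHoehnkeRadical.radClass = rh.radClass) :
    rk.toHoehnkeRadical.le rh ∧
      ∀ r : KARadical S, r.toHoehnkeRadical.le rh →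
        r.toHoehnkeRadical.le rk.toHoehnkeRadical := by
  constructor
  · intro A
    rw [Setoid.le_def]
    intro a a' haa'
    obtain ⟨Sys, hSys, hEq⟩ := rk.rees A
    rw [hEq] at haa'
    rcases haa' with rfl | ⟨B, hB, ha, ha'⟩
    · exact (rh.rad A).refl a
    · have hsub : IsSubact A B := (hSys.1 B hB).1
      have hcls : B ∈ nsClasses A (rk.rad A) :=
        mem_nsClasses_of_system A Sys hSys _ hEq hB ha
      have hmem : A.sub B hsub ∈ rh.radClass := by
        rw [← hR]; exact rk.cls_rad A B hcls hsub
      have htop : rh.rad (A.sub B hsub) = ⊤ := hmem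
      have hhom : IsHom (A.sub B hsub) A Subtype.val := fun s b => rfl
      exact rh.functorial (A := A.sub B hsub) (B := A) Subtype.val hhom ⟨a, ha⟩ ⟨a', ha'⟩ (by rw [htop]; trivial)
  · intro r hr A
    rw [Setoid.le_def]
    intro a a' haa'
    obtain ⟨Sys, hSys, hEq⟩ := r.rees A
    rw [hEq] at haa'
    rcases haa' with rfl | ⟨B, hB, ha, ha'⟩
    · exact (rk.rad A).refl a
    · have key : ∀ C ∈ Sys, ∀ h : IsSubact A C,
          A.sub C h ∈ rk.toHoehnkeRadical.radClass := by
        intro C hC hCsub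
        obtain ⟨x, hx, -⟩ := Set.not_subsingleton_iff.mp (hSys.1 C hC).2
        have hcls : C ∈ nsClasses A (r.rad A) :=
          mem_nsClasses_of_system A Sys hSys _ hEq hC hx
        have h1 : r.rad (A.sub C hCsub) = ⊤ := r.cls_rad A C hcls hCsub
        have h2 : rh.rad (A.sub C hCsub) = ⊤ := by
          refine le_antisymm le_top (Setoid.le_def.mpr fun {x y} _ => ?_)
          exact Setoid.le_def.mp (hr _) (by rw [h1]; trivial)
        rw [hR]; exact h2
      obtain ⟨C, hC, hBC⟩ := rk.maximal A Sys hSys key B hB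
      obtain ⟨⟨c, hc⟩, -⟩ := hC
      have hac : rk.rad A a c := by have := hBC ha; rw [hc] at this; exact this
      have ha'c : rk.rad A a' c := by have := hBC ha'; rw [hc] at this; exact this
      exact (rk.rad A).trans hac ((rk.rad A).symm ha'c)
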